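/- arXiv:1910.07769 — 3 statements merged into one kernel-verified Lean document; each statement's English description precedes it below -/
import Mathlib

section
/- For every integer p ≥ 1 and all real numbers a, b, one has |a^p · 1_{a < 0} − b^p · 1_{b < 0}| ≤ |a − b| · ∑_{k=0}^{p−1} |a|^{p−1−k}|b|^k. -/
lemma aux_key (p : ℕ) (a b : ℝ) :
    |a ^ p - b ^ p| ≤ |a - b| * ∑ k ∈ Finset.range p, |a| ^ (p - 1 - k) * |b| ^ k := by
  have h : a ^ p - b ^ p = (a - b) * ∑ k ∈ Finset.range p, b ^ k * a ^ (p - 1 - k) :=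
    (Commute.mul_neg_geom_sum₂ (Commute.all b a) p).symm
  rw [h, abs_mul]
  gcongr
  calc |∑ k ∈ Finset.range p, b ^ k * a ^ (p - 1 - k)|
      ≤ ∑ k ∈ Finset.range p, |b ^ k * a ^ (p - 1 - k)| := Finset.abs_sum_le_sum_abs _ _
    _ = ∑ k ∈ Finset.range p, |a| ^ (p - 1 - k) * |b| ^ k := by
        refine Finset.sum_congr rfl fun k _ => ?_
        rw [abs_mul, abs_pow, abs_pow, mul_comm]

lemma aux_one (p : ℕ) (hp : 1 ≤ p) (a b : ℝ) (ha : a < 0) (hb : 0 ≤ b) :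
    |a| ^ p ≤ |a - b| * ∑ k ∈ Finset.range p, |a| ^ (p - 1 - k) * |b| ^ k := by
  have h1 : |a| ≤ |a - b| := by
    rw [abs_of_neg ha, abs_of_nonpos (by linarith)]; linarith
  have h2 : |a| ^ (p - 1) ≤ ∑ k ∈ Finset.range p, |a| ^ (p - 1 - k) * |b| ^ k := by
    have : |a| ^ (p - 1) = |a| ^ (p - 1 - 0) * |b| ^ 0 := by simp
    rw [this]
    exact Finset.single_le_sum (f := fun k => |a| ^ (p - 1 - k) * |b| ^ k)
      (fun k _ => by positivity) (Finset.mem_range.2 hp)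
  calc |a| ^ p = |a| * |a| ^ (p - 1) := by
        rw [← pow_succ', Nat.sub_add_cancel hp]
    _ ≤ |a - b| * ∑ k ∈ Finset.range p, |a| ^ (p - 1 - k) * |b| ^ k :=
        mul_le_mul h1 h2 (by positivity) (abs_nonneg _)

/-- For every integer `p ≥ 1` and all real `a, b`,
`|a^p · 1_{a < 0} − b^p · 1_{b < 0}| ≤ |a − b| · ∑_{k=0}^{p−1} |a|^{p−1−k} |b|^k`. -/
theorem abs_pow_indicator_neg_sub_le (p : ℕ) (hp : 1 ≤ p) (a b : ℝ) :
    |a ^ p * (if a < 0 then (1 : ℝ) else 0) - b ^ p * (if b < 0 then (1 : ℝ) else 0)| ≤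
      |a - b| * ∑ k ∈ Finset.range p, |a| ^ (p - 1 - k) * |b| ^ k := by
  by_cases ha : a < 0 <;> by_cases hb : b < 0 <;> simp [ha, hb]
  · exact aux_key p a b
  · exact aux_one p hp a b ha (not_lt.1 hb)
  · have := aux_one p hp b a hb (not_lt.1 ha)
    calc |b| ^ p
        ≤ |b - a| * ∑ k ∈ Finset.range p, |b| ^ (p - 1 - k) * |a| ^ k := this
      _ = _ := by
          rw [abs_sub_comm]
          congr 1
          rw [← Finset.sum_range_reflect (fun j => |a| ^ (p - 1 - j) * |b| ^ j) p]
          refine Finset.sum_congr rfl fun k hk => ?_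
          rw [Finset.mem_range] at hk
          rw [mul_comm]
          congr 2 <;> omega
  · positivity
end

section
/- For every integer p ≥ 1 and all real numbers a, b with b ≤ a, one has |a − b|^p ≤ 2^{p−1}·(sgn(a)|a|^p − sgn(b)|b|^p). -/
/-- For `p ≥ 1` and reals `b ≤ a`, `|a − b|^p ≤ 2^{p−1} (sgn(a)|a|^p − sgn(b)|b|^p)`. -/
theorem abs_sub_pow_le_signed_pow (p : ℕ) (hp : 1 ≤ p) (a b : ℝ) (hba : b ≤ a) :
    |a - b| ^ p ≤ 2 ^ (p - 1) * (Real.sign a * |a| ^ p - Real.sign b * |b| ^ p) := by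
  have hp0 : p ≠ 0 := by omega
  have h2 : (1:ℝ) ≤ 2 ^ (p - 1) := one_le_pow₀ (by norm_num)
  have key : ∀ x : ℝ, 0 ≤ x → Real.sign x * |x| ^ p = x ^ p := by
    intro x hx
    rcases hx.lt_or_eq with h | h
    · rw [Real.sign_of_pos h, abs_of_pos h, one_mul]
    · rw [← h]; simp [zero_pow hp0]
  have keyn : ∀ x : ℝ, x < 0 → Real.sign x * |x| ^ p = -((-x) ^ p) := by
    intro x hx
    rw [Real.sign_of_neg hx, abs_of_neg hx, neg_one_mul]
  have sub_case : ∀ x y : ℝ, 0 ≤ y → y ≤ x → (x - y) ^ p ≤ x ^ p - y ^ p := by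
    intro x y hy hyx
    have := pow_add_pow_le (sub_nonneg.2 hyx) hy hp0
    rw [sub_add_cancel] at this
    linarith
  rcases le_or_gt 0 b with hb | hb
  · -- 0 ≤ b ≤ a
    have ha : 0 ≤ a := hb.trans hba
    rw [key a ha, key b hb, abs_of_nonneg (sub_nonneg.2 hba)]
    have h1 := sub_case a b hb hba
    have h3 : (0:ℝ) ≤ a ^ p - b ^ p := by
      have := pow_le_pow_left₀ hb hba p
      linarith
    nlinarith
  · rcases le_or_gt 0 a with ha | ha
    · -- b < 0 ≤ a
      rw [key a ha, keyn b hb, abs_of_nonneg (sub_nonneg.2 hba), sub_neg_eq_add,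
        show a - b = a + (-b) by ring]
      exact add_pow_le ha (by linarith) p
    · -- b ≤ a < 0
      rw [keyn a ha, keyn b hb, abs_of_nonneg (sub_nonneg.2 hba)]
      have h1 := sub_case (-b) (-a) (by linarith) (by linarith)
      rw [show -b - -a = a - b by ring] at h1
      have h3 : (0:ℝ) ≤ (-b) ^ p - (-a) ^ p := by
        have := pow_le_pow_left₀ (by linarith : (0:ℝ) ≤ -a) (by linarith : -a ≤ -b) p
        linarith
      nlinarith
end

section
/- Let (X, μ) be a measure space, p ≥ 1 an integer, and f, g ∈ L^p(X, μ) with g(x) ≤ f(x) for μ-almost every x. Define φ_p(h) = 2^{p−1} ∫_X sgn(h(x)) |h(x)|^p dμ(x). Then ‖f − g‖_{L^p}^p ≤ φ_p(f) − φ_p(g). -/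
open MeasureTheory
open scoped ENNReal

lemma psi_eq (p : ℕ) (hp : 1 ≤ p) (t : ℝ) :
    Real.sign t * |t| ^ p = t * |t| ^ (p - 1) := by
  obtain ⟨q, rfl⟩ : ∃ q, p = q + 1 := ⟨p - 1, (Nat.succ_pred_eq_of_pos hp).symm⟩
  rw [Nat.add_sub_cancel]
  rcases lt_trichotomy t 0 with h | h | h
  · rw [Real.sign_of_neg h, abs_of_neg h, pow_succ]; ring
  · simp [h]
  · rw [Real.sign_of_pos h, abs_of_pos h, pow_succ]; ring

lemma key (p : ℕ) (hp : 1 ≤ p) {a b : ℝ} (h : a ≤ b) :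
    |b - a| ^ p ≤ 2 ^ (p - 1) * (Real.sign b * |b| ^ p)
      - 2 ^ (p - 1) * (Real.sign a * |a| ^ p) := by
  have h2 : (1 : ℝ) ≤ 2 ^ (p - 1) := one_le_pow₀ (by norm_num)
  rw [abs_of_nonneg (sub_nonneg.mpr h)]
  have hmain : ∀ a b : ℝ, 0 ≤ a → a ≤ b →
      (b - a) ^ p ≤ 2 ^ (p - 1) * (Real.sign b * |b| ^ p)
        - 2 ^ (p - 1) * (Real.sign a * |a| ^ p) := by
    intro a b ha hab
    rcases eq_or_lt_of_le ha with rfl | ha'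
    · rcases eq_or_lt_of_le hab with rfl | hb'
      · simp [zero_pow (Nat.one_le_iff_ne_zero.mp hp)]
      · rw [Real.sign_of_pos hb', abs_of_pos hb']
        simp only [Real.sign_zero, abs_zero, zero_mul, mul_zero, sub_zero, one_mul]
        have := mul_le_mul_of_nonneg_right h2 (pow_nonneg hb'.le p)
        linarith
    · have hb : 0 < b := lt_of_lt_of_le ha' hab
      rw [Real.sign_of_pos hb, abs_of_pos hb, Real.sign_of_pos ha', abs_of_pos ha']
      have hsup : (b - a) ^ p + a ^ p ≤ b ^ p := by
        have := pow_add_pow_le (x := b - a) (y := a) (by linarith) ha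
          (Nat.one_le_iff_ne_zero.mp hp)
        simpa using this
      have hpow : a ^ p ≤ b ^ p := pow_le_pow_left₀ ha hab p
      calc (b - a) ^ p ≤ b ^ p - a ^ p := by linarith
        _ ≤ 2 ^ (p - 1) * (b ^ p - a ^ p) :=
            le_mul_of_one_le_left (by linarith) h2
        _ = 2 ^ (p - 1) * (1 * b ^ p) - 2 ^ (p - 1) * (1 * a ^ p) := by ring
  rcases le_or_gt 0 a with ha | ha
  · exact hmain a b ha h
  · rcases le_or_gt b 0 with hb | hb
    · have := hmain (-b) (-a) (by linarith) (by linarith)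
      simp only [Real.sign_neg, abs_neg, neg_mul] at this
      calc (b - a) ^ p = (-a - -b) ^ p := by ring_nf
        _ ≤ 2 ^ (p - 1) * -(Real.sign a * |a| ^ p)
            - 2 ^ (p - 1) * -(Real.sign b * |b| ^ p) := this
        _ = _ := by ring
    · have h1 : (b + (-a)) ^ p ≤ 2 ^ (p - 1) * (b ^ p + (-a) ^ p) :=
        add_pow_le hb.le (by linarith) p
      rw [Real.sign_of_pos hb, abs_of_pos hb, Real.sign_of_neg ha, abs_of_neg ha]
      calc (b - a) ^ p = (b + (-a)) ^ p := by ring_nf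
        _ ≤ 2 ^ (p - 1) * (b ^ p + (-a) ^ p) := h1
        _ = 2 ^ (p - 1) * (1 * b ^ p) - 2 ^ (p - 1) * (-1 * (-a) ^ p) := by ring

/-- If `g ≤ f` a.e. and `f, g ∈ L^p`, then `‖f − g‖_{L^p}^p ≤ φ_p(f) − φ_p(g)`,
where `φ_p(h) = 2^{p−1} ∫ sgn(h)|h|^p dμ`. -/
theorem lp_pow_sub_le_phi_sub {X : Type*} [MeasurableSpace X] (μ : Measure X)
    (p : ℕ) (hp : 1 ≤ p) (f g : X → ℝ)
    (hf : MemLp f p μ) (hg : MemLp g p μ) (hle : ∀ᵐ x ∂μ, g x ≤ f x) :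
    ∫ x, |f x - g x| ^ p ∂μ ≤
      2 ^ (p - 1) * ∫ x, Real.sign (f x) * |f x| ^ p ∂μ -
        2 ^ (p - 1) * ∫ x, Real.sign (g x) * |g x| ^ p ∂μ := by
  have hp0 : (p : ℝ≥0∞) ≠ 0 := by
    simpa using Nat.one_le_iff_ne_zero.mp hp
  have hptop : (p : ℝ≥0∞) ≠ ⊤ := by simp
  have habs : ∀ (h : X → ℝ), MemLp h p μ → Integrable (fun x => |h x| ^ p) μ := by
    intro h hh
    have := hh.integrable_norm_rpow hp0 hptop
    simpa [Real.norm_eq_abs, ENNReal.toReal_natCast, Real.rpow_natCast] using this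
  have hpsi : ∀ (h : X → ℝ), MemLp h p μ →
      Integrable (fun x => Real.sign (h x) * |h x| ^ p) μ := by
    intro h hh
    have hmeas : AEStronglyMeasurable (fun x => Real.sign (h x) * |h x| ^ p) μ := by
      have heq : (fun x => Real.sign (h x) * |h x| ^ p)
          = fun x => h x * |h x| ^ (p - 1) := by
        funext x; exact psi_eq p hp _
      rw [heq]
      exact hh.aestronglyMeasurable.mul
        ((hh.aestronglyMeasurable.norm).pow _)
    refine (habs h hh).mono hmeas (Filter.Eventually.of_forall fun x => ?_)
    simp only [Real.norm_eq_abs, abs_mul, abs_pow, abs_abs]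
    rcases Real.sign_apply_eq (h x) with h1 | h1 | h1 <;>
      simp [h1, pow_nonneg (abs_nonneg (h x)) p]
  have hif := hpsi f hf
  have hig := hpsi g hg
  have hisub : Integrable (fun x => |f x - g x| ^ p) μ := habs _ (hf.sub hg)
  have hmono : ∫ x, |f x - g x| ^ p ∂μ ≤
      ∫ x, (2 ^ (p - 1) * (Real.sign (f x) * |f x| ^ p)
        - 2 ^ (p - 1) * (Real.sign (g x) * |g x| ^ p)) ∂μ := by
    refine integral_mono_ae hisub ((hif.const_mul _).sub (hig.const_mul _)) ?_
    filter_upwards [hle] with x hx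
    exact key p hp hx
  calc _ ≤ _ := hmono
    _ = _ := by
      rw [integral_sub (hif.const_mul _) (hig.const_mul _),
        MeasureTheory.integral_const_mul, MeasureTheory.integral_const_mul]
end
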